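/- Let f : ℝ^m → ℝ^m be C¹, S ∈ ℝ^{d,d}, A ∈ ℝ^{m,m}, and let v⋆ ∈ C³(ℝ^d, ℝ^m) be a classical solution of A·Δv⋆(x) + ⟨Sx, ∇v⋆(x)⟩ + f(v⋆(x)) = 0 on ℝ^d. Suppose λ ∈ ℂ, E ∈ ℂ^{d,d} and b ∈ ℂ^d satisfy λE = ES − SE and λb = −Sb. Then the function v(x) = (Dv⋆(x))(Ex + b) is a classical solution of the eigenvalue problem λ v(x) = A·Δv(x) + ⟨Sx, ∇v(x)⟩ + Df(v⋆(x))·v(x) on ℝ^d. -/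

import Mathlib

open scoped BigOperators Matrix

/-- Partial derivative in the `i`-th coordinate direction. -/
noncomputable def pd {d : ℕ} {F : Type*} [NormedAddCommGroup F] [NormedSpace ℝ F]
    (i : Fin d) (g : (Fin d → ℝ) → F) (x : Fin d → ℝ) : F :=
  fderiv ℝ g x (Pi.single i 1)

section helpers
variable {d : ℕ}

lemma pd_contDiff {F : Type*} [NormedAddCommGroup F] [NormedSpace ℝ F]
    {n m : WithTop ℕ∞} {g : (Fin d → ℝ) → F} (hg : ContDiff ℝ n g) (hmn : m + 1 ≤ n) (i : Fin d) :
    ContDiff ℝ m (pd i g) := by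
  unfold pd
  exact (ContinuousLinearMap.apply ℝ F (Pi.single i 1)).contDiff.comp (hg.fderiv_right hmn)

lemma pd_ofReal {g : (Fin d → ℝ) → ℝ} {x : Fin d → ℝ} (hg : DifferentiableAt ℝ g x) (i : Fin d) :
    pd i (fun z => (g z : ℂ)) x = Complex.ofReal (pd i g x) := by
  unfold pd
  rw [show (fun z => ((g z : ℝ) : ℂ)) = ⇑Complex.ofRealCLM ∘ g from rfl,
    (Complex.ofRealCLM.hasFDerivAt.comp x hg.hasFDerivAt).fderiv]
  rfl

lemma pd_sum {F : Type*} [NormedAddCommGroup F] [NormedSpace ℝ F] {ι : Type*} {s : Finset ι}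
    {g : ι → (Fin d → ℝ) → F} {x : Fin d → ℝ} (hg : ∀ j ∈ s, DifferentiableAt ℝ (g j) x)
    (i : Fin d) :
    pd i (fun z => ∑ j ∈ s, g j z) x = ∑ j ∈ s, pd i (g j) x := by
  unfold pd
  rw [fderiv_fun_sum hg]
  simp

lemma pd_mul {𝔸 : Type*} [NormedRing 𝔸] [NormedAlgebra ℝ 𝔸] {g h : (Fin d → ℝ) → 𝔸}
    {x : Fin d → ℝ} (hg : DifferentiableAt ℝ g x) (hh : DifferentiableAt ℝ h x) (i : Fin d) :
    pd i (fun z => g z * h z) x = pd i g x * h x + g x * pd i h x := by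
  unfold pd
  rw [fderiv_fun_mul' hg hh]
  simp [smul_eq_mul, add_comm]

lemma pd_const {F : Type*} [NormedAddCommGroup F] [NormedSpace ℝ F] (c : F) (i : Fin d)
    (x : Fin d → ℝ) : pd i (fun _ => c) x = 0 := by
  unfold pd; simp

lemma pd_add {F : Type*} [NormedAddCommGroup F] [NormedSpace ℝ F] {g h : (Fin d → ℝ) → F}
    {x : Fin d → ℝ} (hg : DifferentiableAt ℝ g x) (hh : DifferentiableAt ℝ h x) (i : Fin d) :
    pd i (fun z => g z + h z) x = pd i g x + pd i h x := by
  unfold pd; rw [fderiv_fun_add hg hh]; simp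

lemma pd_const_mul {𝔸 : Type*} [NormedRing 𝔸] [NormedAlgebra ℝ 𝔸] {g : (Fin d → ℝ) → 𝔸}
    {x : Fin d → ℝ} (hg : DifferentiableAt ℝ g x) (c : 𝔸) (i : Fin d) :
    pd i (fun z => c * g z) x = c * pd i g x := by
  unfold pd
  rw [fderiv_const_mul hg]
  simp

lemma pd_coord (i l : Fin d) (x : Fin d → ℝ) :
    pd i (fun z : Fin d → ℝ => z l) x = if l = i then 1 else 0 := by
  unfold pd
  rw [show (fun z : Fin d → ℝ => z l)
      = ⇑(ContinuousLinearMap.proj (R := ℝ) (φ := fun _ : Fin d => ℝ) l) from rfl,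
    ContinuousLinearMap.fderiv]
  simp [Pi.single_apply]

lemma pd_pd_eq {F : Type*} [NormedAddCommGroup F] [NormedSpace ℝ F]
    {g : (Fin d → ℝ) → F} {x : Fin d → ℝ} (hg : DifferentiableAt ℝ (fderiv ℝ g) x)
    (i j : Fin d) :
    pd i (pd j g) x = fderiv ℝ (fderiv ℝ g) x (Pi.single i 1) (Pi.single j 1) := by
  unfold pd
  rw [show (fun y => fderiv ℝ g y (Pi.single j 1))
      = ⇑(ContinuousLinearMap.apply ℝ F (Pi.single j 1)) ∘ fderiv ℝ g from rfl,
    ((ContinuousLinearMap.apply ℝ F (Pi.single j 1)).hasFDerivAt.comp x hg.hasFDerivAt).fderiv]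
  rfl

lemma pd_comm {g : (Fin d → ℝ) → ℝ} (hg : ContDiff ℝ 2 g) (i j : Fin d) (x : Fin d → ℝ) :
    pd i (pd j g) x = pd j (pd i g) x := by
  have hd : DifferentiableAt ℝ (fderiv ℝ g) x :=
    ((hg.fderiv_right (le_refl ((1 : WithTop ℕ∞) + 1))).differentiable one_ne_zero) x
  rw [pd_pd_eq hd, pd_pd_eq hd]
  exact (hg.contDiffAt.isSymmSndFDerivAt (by norm_num)) _ _

lemma pd_comp {m : ℕ} {f : (Fin m → ℝ) → ℝ} {φ : (Fin d → ℝ) → (Fin m → ℝ)} {x : Fin d → ℝ}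
    (hf : DifferentiableAt ℝ f (φ x)) (hφ : DifferentiableAt ℝ φ x) (j : Fin d) :
    pd j (fun z => f (φ z)) x
      = ∑ l, fderiv ℝ f (φ x) (Pi.single l 1) * pd j (fun z => φ z l) x := by
  unfold pd
  have h1 : ∀ l, fderiv ℝ (fun z => φ z l) x (Pi.single j 1)
      = fderiv ℝ φ x (Pi.single j 1) l := by
    intro l
    rw [show (fun z => φ z l)
        = ⇑(ContinuousLinearMap.proj (R := ℝ) (φ := fun _ : Fin m => ℝ) l) ∘ φ from rfl,
      ((ContinuousLinearMap.proj (R := ℝ) (φ := fun _ : Fin m => ℝ) l).hasFDerivAt.comp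
        x hφ.hasFDerivAt).fderiv]
    rfl
  rw [show (fun z => f (φ z)) = f ∘ φ from rfl, fderiv_comp x hf hφ]
  simp only [ContinuousLinearMap.coe_comp', Function.comp_apply]
  set u := fderiv ℝ φ x (Pi.single j 1) with hu
  calc fderiv ℝ f (φ x) u = fderiv ℝ f (φ x) (∑ l, Pi.single l (u l)) := by
        rw [Finset.univ_sum_single]
    _ = ∑ l, fderiv ℝ f (φ x) (Pi.single l (u l)) := map_sum _ _ _
    _ = ∑ l, u l • fderiv ℝ f (φ x) (Pi.single l 1) := by
        refine Finset.sum_congr rfl fun l _ => ?_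
        have : Pi.single l (u l) = u l • (Pi.single l 1 : Fin m → ℝ) := by
          funext r; simp [Pi.single_apply]
        rw [this, map_smul]
    _ = ∑ l, fderiv ℝ f (φ x) (Pi.single l 1) * u l := by
        refine Finset.sum_congr rfl fun l _ => ?_
        rw [smul_eq_mul, mul_comm]
  refine Finset.sum_congr rfl fun l _ => ?_
  rw [h1 l]

lemma sum_mul_swap {ι κ : Type*} (sι : Finset ι) (sκ : Finset κ)
    (a : ι → ℂ) (u : ι → κ → ℂ) (c : κ → ℂ) :
    ∑ l ∈ sι, a l * ∑ j ∈ sκ, u l j * c j = ∑ j ∈ sκ, (∑ l ∈ sι, a l * u l j) * c j := by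
  simp only [Finset.mul_sum, Finset.sum_mul]
  rw [Finset.sum_comm]
  exact Finset.sum_congr rfl fun j _ => Finset.sum_congr rfl fun l _ => by ring

lemma sum_mul_swap' {ι κ : Type*} (sι : Finset ι) (sκ : Finset κ)
    (p : κ → ℂ) (e : κ → ι → ℂ) (s : ι → ℂ) :
    ∑ j ∈ sκ, p j * ∑ i ∈ sι, e j i * s i = ∑ i ∈ sι, s i * ∑ j ∈ sκ, p j * e j i := by
  simp only [Finset.mul_sum]
  rw [Finset.sum_comm]
  exact Finset.sum_congr rfl fun i _ => Finset.sum_congr rfl fun j _ => by ring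

lemma sum_mul_swap'' {κ : Type*} (t : Finset κ) (p : κ → ℂ) (q : κ → κ → ℂ) (c : κ → ℂ) :
    ∑ j ∈ t, p j * ∑ i ∈ t, q j i * c i = ∑ j ∈ t, (∑ i ∈ t, q i j * p i) * c j := by
  simp only [Finset.mul_sum, Finset.sum_mul]
  rw [Finset.sum_comm]
  exact Finset.sum_congr rfl fun j _ => Finset.sum_congr rfl fun i _ => by ring

end helpers

theorem stmt8 {d m : ℕ}
    (f : (Fin m → ℝ) → (Fin m → ℝ)) (hf : ContDiff ℝ 1 f)
    (S : Matrix (Fin d) (Fin d) ℝ) (A : Matrix (Fin m) (Fin m) ℝ)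
    (vstar : (Fin d → ℝ) → (Fin m → ℝ)) (hvstar : ContDiff ℝ 3 vstar)
    (hwave : ∀ x : Fin d → ℝ,
      A.mulVec (fun k => ∑ i, pd i (fun y => pd i (fun z => vstar z k) y) x)
        + (fun k => ∑ i, (∑ j, S i j * x j) * pd i (fun z => vstar z k) x)
        + f (vstar x) = 0)
    (lam : ℂ) (E : Matrix (Fin d) (Fin d) ℂ) (b : Fin d → ℂ)
    (hEskew : Eᵀ = -E)
    (hE : lam • E = E * (S.map Complex.ofReal) - (S.map Complex.ofReal) * E)
    (hb : lam • b = -((S.map Complex.ofReal).mulVec b))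
    (v : (Fin d → ℝ) → (Fin m → ℂ))
    (hvdef : ∀ (x : Fin d → ℝ) (k : Fin m),
      v x k = ∑ j, pd j (fun z => (vstar z k : ℂ)) x
        * (E.mulVec (fun l => (x l : ℂ)) + b) j) :
    ∀ x : Fin d → ℝ,
      lam • v x
        = (A.map Complex.ofReal).mulVec
            (fun k => ∑ i, pd i (fun y => pd i (fun z => v z k) y) x)
          + (fun k => ∑ i, ((∑ j, S i j * x j : ℝ) : ℂ) * pd i (fun z => v z k) x)
          + (fun k => ∑ l, ((fderiv ℝ (fun u => f u k) (vstar x) (Pi.single l 1) : ℝ) : ℂ)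
              * v x l) := by
  intro x
  -- smoothness of components
  have hw : ∀ k, ContDiff ℝ 3 (fun z => vstar z k) := fun k =>
    (ContinuousLinearMap.proj (R := ℝ) (φ := fun _ : Fin m => ℝ) k).contDiff.comp hvstar
  have hw2 : ∀ k, ContDiff ℝ 2 (fun z => vstar z k) := fun k => (hw k).of_le (by norm_num)
  have hP1C : ∀ k j, ContDiff ℝ 2 (pd j (fun z => vstar z k)) := fun k j =>
    pd_contDiff (hw k) (by norm_num) j
  have hP2C : ∀ k i j, ContDiff ℝ 1 (pd i (pd j (fun z => vstar z k))) := fun k i j =>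
    pd_contDiff (hP1C k j) (by norm_num) i
  have hwd : ∀ k (y : Fin d → ℝ), DifferentiableAt ℝ (fun z => vstar z k) y := fun k y =>
    ((hw k).differentiable (by norm_num)) y
  have hP1d : ∀ k j (y : Fin d → ℝ), DifferentiableAt ℝ (pd j (fun z => vstar z k)) y :=
    fun k j y => ((hP1C k j).differentiable (by norm_num)) y
  have hP2d : ∀ k i j (y : Fin d → ℝ),
      DifferentiableAt ℝ (pd i (pd j (fun z => vstar z k))) y :=
    fun k i j y => ((hP2C k i j).differentiable (by norm_num)) y
  -- the affine coefficient function
  obtain ⟨ce, hce⟩ : ∃ ce : Fin d → (Fin d → ℝ) → ℂ,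
      ce = fun j z => (∑ l, E j l * (z l : ℂ)) + b j := ⟨_, rfl⟩
  have hceE : ∀ (j : Fin d) (z : Fin d → ℝ),
      (E.mulVec (fun l => (z l : ℂ)) + b) j = ce j z := by
    intro j z
    simp [hce, Matrix.mulVec, dotProduct]
  have hced : ∀ j, Differentiable ℝ (ce j) := by
    intro j
    rw [hce]
    apply Differentiable.add _ (differentiable_const _)
    apply Differentiable.fun_sum
    intro l _
    exact (Complex.ofRealCLM.differentiable.comp (differentiable_pi.mp differentiable_id l)).const_mul _
  have hcoordd : ∀ (l : Fin d) (y : Fin d → ℝ),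
      DifferentiableAt ℝ (fun z : Fin d → ℝ => ((z l : ℝ) : ℂ)) y := fun l y =>
    Complex.ofRealCLM.differentiableAt.comp y ((differentiable_pi.mp differentiable_id l) y)
  have hcoordC : ∀ (l i : Fin d) (y : Fin d → ℝ),
      pd i (fun z : Fin d → ℝ => ((z l : ℝ) : ℂ)) y = if l = i then 1 else 0 := by
    intro l i y
    rw [pd_ofReal (g := fun z : Fin d → ℝ => z l) ((differentiable_pi.mp differentiable_id l) y) i, pd_coord]
    split <;> simp
  have hcepd : ∀ (j i : Fin d) (y : Fin d → ℝ), pd i (ce j) y = E j i := by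
    intro j i y
    rw [hce]
    rw [pd_add (DifferentiableAt.fun_sum fun l _ => ((hcoordd l y).const_mul _))
      (differentiableAt_const _) i, pd_const, add_zero,
      pd_sum (fun l _ => (hcoordd l y).const_mul _) i]
    have : ∀ l : Fin d, pd i (fun z : Fin d → ℝ => E j l * ((z l : ℝ) : ℂ)) y
        = E j l * (if l = i then 1 else 0) := by
      intro l
      rw [pd_const_mul (hcoordd l y) (E j l) i, hcoordC]
    rw [Finset.sum_congr rfl fun l _ => this l]
    simp
  -- explicit formula for v
  have hv_fun : ∀ k, (fun z => v z k)
      = fun z => ∑ j, ((pd j (fun y => vstar y k) z : ℝ) : ℂ) * ce j z := by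
    intro k; funext z
    rw [hvdef z k]
    refine Finset.sum_congr rfl fun j _ => ?_
    rw [hceE j z, pd_ofReal (hwd k z) j]
  have hP1Cd : ∀ (k : Fin m) (j : Fin d) (y : Fin d → ℝ),
      DifferentiableAt ℝ (fun z => ((pd j (fun t => vstar t k) z : ℝ) : ℂ)) y := fun k j y =>
    Complex.ofRealCLM.differentiableAt.comp y (hP1d k j y)
  have hP2Cd : ∀ (k : Fin m) (i j : Fin d) (y : Fin d → ℝ),
      DifferentiableAt ℝ (fun z => ((pd i (pd j (fun t => vstar t k)) z : ℝ) : ℂ)) y :=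
    fun k i j y => Complex.ofRealCLM.differentiableAt.comp y (hP2d k i j y)
  -- first derivatives of v
  have hdv : ∀ (k : Fin m) (i : Fin d) (y : Fin d → ℝ),
      pd i (fun z => v z k) y
        = (∑ j, ((pd i (pd j (fun t => vstar t k)) y : ℝ) : ℂ) * ce j y)
          + ∑ j, ((pd j (fun t => vstar t k) y : ℝ) : ℂ) * E j i := by
    intro k i y
    rw [hv_fun k, pd_sum (fun j _ => (hP1Cd k j y).fun_mul ((hced j) y)) i]
    have : ∀ j : Fin d, pd i (fun z => ((pd j (fun t => vstar t k) z : ℝ) : ℂ) * ce j z) y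
        = ((pd i (pd j (fun t => vstar t k)) y : ℝ) : ℂ) * ce j y
          + ((pd j (fun t => vstar t k) y : ℝ) : ℂ) * E j i := by
      intro j
      rw [pd_mul (hP1Cd k j y) ((hced j) y) i, pd_ofReal (hP1d k j y) i, hcepd j i y]
    rw [Finset.sum_congr rfl fun j _ => this j, Finset.sum_add_distrib]
  -- second derivatives of v (at x)
  have hlap : ∀ (k : Fin m) (i : Fin d),
      pd i (pd i (fun z => v z k)) x
        = ((∑ j, (((pd i (pd i (pd j (fun t => vstar t k)))) x : ℝ) : ℂ) * ce j x
            + ∑ j, ((pd i (pd j (fun t => vstar t k)) x : ℝ) : ℂ) * E j i)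
          + ∑ j, ((pd i (pd j (fun t => vstar t k)) x : ℝ) : ℂ) * E j i) := by
    intro k i
    have hfun : pd i (fun z => v z k)
        = fun y => (∑ j, ((pd i (pd j (fun t => vstar t k)) y : ℝ) : ℂ) * ce j y)
          + ∑ j, ((pd j (fun t => vstar t k) y : ℝ) : ℂ) * E j i := funext (hdv k i)
    rw [hfun, pd_add (DifferentiableAt.fun_sum fun j _ => (hP2Cd k i j x).fun_mul ((hced j) x))
      (DifferentiableAt.fun_sum fun j _ => (hP1Cd k j x).fun_mul (differentiableAt_const _)) i,
      pd_sum (fun j _ => (hP2Cd k i j x).fun_mul ((hced j) x)) i,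
      pd_sum (fun j _ => (hP1Cd k j x).fun_mul (differentiableAt_const _)) i]
    congr 1
    · have : ∀ j : Fin d,
          pd i (fun y => ((pd i (pd j (fun t => vstar t k)) y : ℝ) : ℂ) * ce j y) x
            = ((pd i (pd i (pd j (fun t => vstar t k))) x : ℝ) : ℂ) * ce j x
              + ((pd i (pd j (fun t => vstar t k)) x : ℝ) : ℂ) * E j i := by
        intro j
        rw [pd_mul (hP2Cd k i j x) ((hced j) x) i, pd_ofReal (hP2d k i j x) i, hcepd j i x]
      rw [Finset.sum_congr rfl fun j _ => this j, Finset.sum_add_distrib]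
    · refine Finset.sum_congr rfl fun j _ => ?_
      rw [pd_mul (hP1Cd k j x) (differentiableAt_const _) i, pd_const, mul_zero, add_zero,
        pd_ofReal (hP1d k j x) i]
  -- skew-symmetry cancellation
  have hEskew' : ∀ i j : Fin d, E j i = -E i j := by
    intro i j
    have := congrFun (congrFun hEskew i) j
    simpa [Matrix.transpose_apply] using this
  have hskew : ∀ k : Fin m,
      ∑ i, ∑ j, ((pd i (pd j (fun t => vstar t k)) x : ℝ) : ℂ) * E j i = 0 := by
    intro k
    set T := ∑ i, ∑ j, ((pd i (pd j (fun t => vstar t k)) x : ℝ) : ℂ) * E j i with hT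
    have hsym : T = -T := by
      calc T = ∑ i, ∑ j, ((pd j (pd i (fun t => vstar t k)) x : ℝ) : ℂ) * (-(E i j)) := by
            refine Finset.sum_congr rfl fun i _ => Finset.sum_congr rfl fun j _ => ?_
            rw [← hEskew' i j, pd_comm (hw2 k) i j x]
        _ = -∑ j, ∑ i, ((pd j (pd i (fun t => vstar t k)) x : ℝ) : ℂ) * E i j := by
            rw [Finset.sum_comm]
            simp [Finset.sum_neg_distrib, mul_neg]
        _ = -T := by rw [hT]
    have h2 : (2 : ℂ) * T = 0 := by linear_combination hsym
    have := mul_eq_zero.mp h2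
    simpa using this
  -- scalar form of the wave equation
  have hwave' : ∀ (z : Fin d → ℝ) (k : Fin m),
      (∑ l, A k l * ∑ i, pd i (pd i (fun t => vstar t l)) z)
        + ((∑ i, (∑ r, S i r * z r) * pd i (fun t => vstar t k) z) + f (vstar z) k) = 0 := by
    intro z k
    have h := congrFun (hwave z) k
    simp only [Pi.add_apply, Pi.zero_apply, Matrix.mulVec, dotProduct] at h
    rw [add_assoc] at h
    exact h
  -- differentiability of f components
  have hfk : ∀ k : Fin m, Differentiable ℝ (fun u => f u k) := fun k =>
    ((ContinuousLinearMap.proj (R := ℝ) (φ := fun _ : Fin m => ℝ) k).contDiff.comp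
      hf).differentiable one_ne_zero
  have hvstard : Differentiable ℝ vstar := hvstar.differentiable (by norm_num)
  -- differentiate the wave equation in direction j at x
  have hwaved : ∀ (k : Fin m) (j : Fin d),
      (∑ l, A k l * ∑ i, pd i (pd i (pd j (fun t => vstar t l))) x)
        + ((∑ i, (S i j * pd i (fun t => vstar t k) x
              + (∑ r, S i r * x r) * pd i (pd j (fun t => vstar t k)) x))
          + ∑ l, fderiv ℝ (fun u => f u k) (vstar x) (Pi.single l 1)
              * pd j (fun t => vstar t l) x) = 0 := by
    intro k j
    have hzero : pd j (fun z =>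
        (∑ l, A k l * ∑ i, pd i (pd i (fun t => vstar t l)) z)
          + ((∑ i, (∑ r, S i r * z r) * pd i (fun t => vstar t k) z) + f (vstar z) k)) x
        = 0 := by
      rw [show (fun z =>
          (∑ l, A k l * ∑ i, pd i (pd i (fun t => vstar t l)) z)
            + ((∑ i, (∑ r, S i r * z r) * pd i (fun t => vstar t k) z) + f (vstar z) k))
          = fun _ => (0 : ℝ) from funext fun z => hwave' z k, pd_const]
    -- differentiability of the three pieces
    have hd1 : ∀ y : Fin d → ℝ, DifferentiableAt ℝ
        (fun z => ∑ l, A k l * ∑ i, pd i (pd i (fun t => vstar t l)) z) y := fun y =>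
      DifferentiableAt.fun_sum fun l _ =>
        (DifferentiableAt.fun_sum fun i _ => hP2d l i i y).const_mul _
    have hlin : ∀ (i : Fin d) (y : Fin d → ℝ), DifferentiableAt ℝ
        (fun z : Fin d → ℝ => ∑ r, S i r * z r) y := fun i y =>
      DifferentiableAt.fun_sum fun r _ => ((differentiable_pi.mp differentiable_id r) y).const_mul _
    have hd2 : ∀ y : Fin d → ℝ, DifferentiableAt ℝ
        (fun z => ∑ i, (∑ r, S i r * z r) * pd i (fun t => vstar t k) z) y := fun y =>
      DifferentiableAt.fun_sum fun i _ => (hlin i y).fun_mul (hP1d k i y)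
    have hd3 : ∀ y : Fin d → ℝ, DifferentiableAt ℝ (fun z => f (vstar z) k) y := fun y =>
      ((hfk k) (vstar y)).comp y (hvstard y)
    rw [pd_add (hd1 x) ((hd2 x).fun_add (hd3 x)) j, pd_add (hd2 x) (hd3 x) j] at hzero
    -- compute the three derivatives
    have e1 : pd j (fun z => ∑ l, A k l * ∑ i, pd i (pd i (fun t => vstar t l)) z) x
        = ∑ l, A k l * ∑ i, pd i (pd i (pd j (fun t => vstar t l))) x := by
      rw [pd_sum (fun l _ => (DifferentiableAt.fun_sum fun i _ => hP2d l i i x).const_mul _) j]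
      refine Finset.sum_congr rfl fun l _ => ?_
      rw [pd_const_mul (DifferentiableAt.fun_sum fun i _ => hP2d l i i x) _ j,
        pd_sum (fun i _ => hP2d l i i x) j]
      congr 1
      refine Finset.sum_congr rfl fun i _ => ?_
      have e2 : pd j (pd i (fun t => vstar t l)) = pd i (pd j (fun t => vstar t l)) :=
        funext fun y => pd_comm (hw2 l) j i y
      rw [pd_comm (hP1C l i) j i x, e2]
    have e2 : pd j (fun z => ∑ i, (∑ r, S i r * z r) * pd i (fun t => vstar t k) z) x
        = ∑ i, (S i j * pd i (fun t => vstar t k) x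
            + (∑ r, S i r * x r) * pd i (pd j (fun t => vstar t k)) x) := by
      rw [pd_sum (fun i _ => (hlin i x).fun_mul (hP1d k i x)) j]
      refine Finset.sum_congr rfl fun i _ => ?_
      rw [pd_mul (hlin i x) (hP1d k i x) j]
      have elin : pd j (fun z : Fin d → ℝ => ∑ r, S i r * z r) x = S i j := by
        rw [pd_sum (g := fun r (z : Fin d → ℝ) => S i r * z r)
          (fun r _ => ((differentiable_pi.mp differentiable_id r) x).const_mul _) j]
        have : ∀ r : Fin d, pd j (fun z : Fin d → ℝ => S i r * z r) x
            = S i r * (if r = j then 1 else 0) := by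
          intro r
          rw [pd_const_mul (g := fun z : Fin d → ℝ => z r)
            ((differentiable_pi.mp differentiable_id r) x) _ j, pd_coord]
        rw [Finset.sum_congr rfl fun r _ => this r]
        simp
      rw [elin, pd_comm (hw2 k) j i x]
    have e3 : pd j (fun z => f (vstar z) k) x
        = ∑ l, fderiv ℝ (fun u => f u k) (vstar x) (Pi.single l 1)
            * pd j (fun t => vstar t l) x := by
      exact pd_comp ((hfk k) (vstar x)) (hvstard x) j
    rw [e1, e2, e3] at hzero
    exact hzero
  -- Laplacian of v
  have hlapsum : ∀ k : Fin m,
      ∑ i, pd i (pd i (fun z => v z k)) x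
        = ∑ j, ((∑ i, pd i (pd i (pd j (fun t => vstar t k))) x : ℝ) : ℂ) * ce j x := by
    intro k
    rw [Finset.sum_congr rfl fun i _ => hlap k i]
    simp only [Finset.sum_add_distrib]
    rw [hskew k, add_zero, add_zero, Finset.sum_comm]
    refine Finset.sum_congr rfl fun j _ => ?_
    rw [← Finset.sum_mul]
    norm_cast
  -- complexified differentiated wave equation
  have hwavedC : ∀ (k : Fin m) (j : Fin d),
      (∑ l, (A k l : ℂ) * ∑ i, ((pd i (pd i (pd j (fun t => vstar t l))) x : ℝ) : ℂ))
        + ((∑ i, ((S i j : ℂ) * ((pd i (fun t => vstar t k) x : ℝ) : ℂ)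
              + (∑ r, (S i r : ℂ) * (x r : ℂ))
                * ((pd i (pd j (fun t => vstar t k)) x : ℝ) : ℂ)))
          + ∑ l, ((fderiv ℝ (fun u => f u k) (vstar x) (Pi.single l 1) : ℝ) : ℂ)
              * ((pd j (fun t => vstar t l) x : ℝ) : ℂ)) = 0 := by
    intro k j
    have h := congrArg (Complex.ofReal) (hwaved k j)
    push_cast at h
    convert h using 2
  -- entrywise consequences of hE and hb
  have hEij : ∀ j l : Fin d, lam * E j l
      = (∑ r, E j r * (S r l : ℂ)) - ∑ r, (S j r : ℂ) * E r l := by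
    intro j l
    have h := congrFun (congrFun hE j) l
    simpa [Matrix.smul_apply, Matrix.mul_apply, Matrix.sub_apply, Matrix.map_apply,
      smul_eq_mul] using h
  have hbj : ∀ j : Fin d, lam * b j = -∑ r, (S j r : ℂ) * b r := by
    intro j
    have h := congrFun hb j
    simpa [Matrix.mulVec, dotProduct, Matrix.map_apply, smul_eq_mul] using h
  -- action of lam on the coefficients
  have hlamc : ∀ j : Fin d, lam * ce j x
      = (∑ i, E j i * ∑ r, (S i r : ℂ) * (x r : ℂ)) - ∑ i, (S j i : ℂ) * ce i x := by
    intro j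
    have hcei : ∀ i : Fin d, ce i x = (∑ l, E i l * (x l : ℂ)) + b i := fun i => by rw [hce]
    rw [hcei j, mul_add, hbj j, Finset.mul_sum]
    have h1 : ∀ l : Fin d, lam * (E j l * (x l : ℂ))
        = (∑ r, E j r * ((S r l : ℂ) * (x l : ℂ))) - ∑ r, (S j r : ℂ) * (E r l * (x l : ℂ)) := by
      intro l
      have := hEij j l
      calc lam * (E j l * (x l : ℂ)) = (lam * E j l) * (x l : ℂ) := by ring
        _ = ((∑ r, E j r * (S r l : ℂ)) - ∑ r, (S j r : ℂ) * E r l) * (x l : ℂ) := by rw [this]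
        _ = _ := by
            rw [sub_mul, Finset.sum_mul, Finset.sum_mul]
            congr 1 <;> exact Finset.sum_congr rfl fun r _ => by ring
    rw [Finset.sum_congr rfl fun l _ => h1 l, Finset.sum_sub_distrib]
    have hA : ∑ l, ∑ r, E j r * ((S r l : ℂ) * (x l : ℂ))
        = ∑ i, E j i * ∑ r, (S i r : ℂ) * (x r : ℂ) := by
      rw [Finset.sum_comm]
      exact Finset.sum_congr rfl fun r _ => by rw [← Finset.mul_sum]
    have hB : ∑ l, ∑ r, (S j r : ℂ) * (E r l * (x l : ℂ))
        = ∑ i, (S j i : ℂ) * ∑ l, E i l * (x l : ℂ) := by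
      rw [Finset.sum_comm]
      exact Finset.sum_congr rfl fun r _ => by rw [← Finset.mul_sum]
    rw [hA, hB]
    have hC : ∑ i, (S j i : ℂ) * ce i x
        = (∑ i, (S j i : ℂ) * ∑ l, E i l * (x l : ℂ)) + ∑ i, (S j i : ℂ) * b i := by
      rw [← Finset.sum_add_distrib]
      exact Finset.sum_congr rfl fun i _ => by rw [hcei i, mul_add]
    rw [hC]
    ring
  have hvx : ∀ l : Fin m, v x l = ∑ j, ((pd j (fun t => vstar t l) x : ℝ) : ℂ) * ce j x :=
    fun l => congrFun (hv_fun l) x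
  funext k
  simp only [Pi.add_apply, Pi.smul_apply, smul_eq_mul, Matrix.mulVec, dotProduct,
    Matrix.map_apply]
  simp only [hlapsum]
  simp only [hdv, hvx]
  push_cast
  have key : ∀ j : Fin d,
      (∑ l, (A k l : ℂ) * ∑ i, ((pd i (pd i (pd j (fun t => vstar t l))) x : ℝ) : ℂ))
        = -(((∑ i, ((S i j : ℂ) * ((pd i (fun t => vstar t k) x : ℝ) : ℂ)))
            + ∑ i, (∑ r, (S i r : ℂ) * (x r : ℂ)) * ((pd i (pd j (fun t => vstar t k)) x : ℝ) : ℂ))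
          + ∑ l, ((fderiv ℝ (fun u => f u k) (vstar x) (Pi.single l 1) : ℝ) : ℂ)
              * ((pd j (fun t => vstar t l) x : ℝ) : ℂ)) := by
    intro j
    have h := hwavedC k j
    rw [Finset.sum_add_distrib] at h
    linear_combination h
  -- shorthand for the atoms (purely notational)
  rw [sum_mul_swap Finset.univ Finset.univ (fun l => (A k l : ℂ))
    (fun l j => ∑ i, ((pd i (pd i (pd j (fun t => vstar t l))) x : ℝ) : ℂ)) (fun j => ce j x)]
  have e1 : ∑ j, (∑ l, (A k l : ℂ) * ∑ i, ((pd i (pd i (pd j (fun t => vstar t l))) x : ℝ) : ℂ)) * ce j x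
      = ∑ j, (-(((∑ i, ((S i j : ℂ) * ((pd i (fun t => vstar t k) x : ℝ) : ℂ)))
            + ∑ i, (∑ r, (S i r : ℂ) * (x r : ℂ)) * ((pd i (pd j (fun t => vstar t k)) x : ℝ) : ℂ))
          + ∑ l, ((fderiv ℝ (fun u => f u k) (vstar x) (Pi.single l 1) : ℝ) : ℂ)
              * ((pd j (fun t => vstar t l) x : ℝ) : ℂ))) * ce j x :=
    Finset.sum_congr rfl fun j _ => by rw [key j]
  rw [e1]
  have e4 : ∑ j, (-(((∑ i, ((S i j : ℂ) * ((pd i (fun t => vstar t k) x : ℝ) : ℂ)))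
            + ∑ i, (∑ r, (S i r : ℂ) * (x r : ℂ)) * ((pd i (pd j (fun t => vstar t k)) x : ℝ) : ℂ))
          + ∑ l, ((fderiv ℝ (fun u => f u k) (vstar x) (Pi.single l 1) : ℝ) : ℂ)
              * ((pd j (fun t => vstar t l) x : ℝ) : ℂ))) * ce j x
      = -((∑ j, (∑ i, ((S i j : ℂ) * ((pd i (fun t => vstar t k) x : ℝ) : ℂ))) * ce j x
            + ∑ j, (∑ i, (∑ r, (S i r : ℂ) * (x r : ℂ))
                * ((pd i (pd j (fun t => vstar t k)) x : ℝ) : ℂ)) * ce j x)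
          + ∑ j, (∑ l, ((fderiv ℝ (fun u => f u k) (vstar x) (Pi.single l 1) : ℝ) : ℂ)
              * ((pd j (fun t => vstar t l) x : ℝ) : ℂ)) * ce j x) := by
    rw [← Finset.sum_add_distrib, ← Finset.sum_add_distrib, ← Finset.sum_neg_distrib]
    exact Finset.sum_congr rfl fun j _ => by ring
  rw [e4]
  have e5 : ∑ i, (∑ r, (S i r : ℂ) * (x r : ℂ))
          * ((∑ j, ((pd i (pd j (fun t => vstar t k)) x : ℝ) : ℂ) * ce j x)
            + ∑ j, ((pd j (fun t => vstar t k) x : ℝ) : ℂ) * E j i)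
      = (∑ i, (∑ r, (S i r : ℂ) * (x r : ℂ))
            * ∑ j, ((pd i (pd j (fun t => vstar t k)) x : ℝ) : ℂ) * ce j x)
        + ∑ i, (∑ r, (S i r : ℂ) * (x r : ℂ))
            * ∑ j, ((pd j (fun t => vstar t k) x : ℝ) : ℂ) * E j i := by
    rw [← Finset.sum_add_distrib]
    exact Finset.sum_congr rfl fun i _ => by rw [mul_add]
  rw [e5]
  -- the two cancellation identities
  have c1 : ∑ j, (∑ i, (∑ r, (S i r : ℂ) * (x r : ℂ))
        * ((pd i (pd j (fun t => vstar t k)) x : ℝ) : ℂ)) * ce j x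
      = ∑ i, (∑ r, (S i r : ℂ) * (x r : ℂ))
        * ∑ j, ((pd i (pd j (fun t => vstar t k)) x : ℝ) : ℂ) * ce j x :=
    (sum_mul_swap Finset.univ Finset.univ _ _ _).symm
  have c2 : ∑ j, (∑ l, ((fderiv ℝ (fun u => f u k) (vstar x) (Pi.single l 1) : ℝ) : ℂ)
        * ((pd j (fun t => vstar t l) x : ℝ) : ℂ)) * ce j x
      = ∑ l, ((fderiv ℝ (fun u => f u k) (vstar x) (Pi.single l 1) : ℝ) : ℂ)
        * ∑ j, ((pd j (fun t => vstar t l) x : ℝ) : ℂ) * ce j x :=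
    (sum_mul_swap Finset.univ Finset.univ _ _ _).symm
  rw [← c1, ← c2]
  -- left-hand side
  have hL : lam * ∑ j, ((pd j (fun t => vstar t k) x : ℝ) : ℂ) * ce j x
      = (∑ i, (∑ r, (S i r : ℂ) * (x r : ℂ))
          * ∑ j, ((pd j (fun t => vstar t k) x : ℝ) : ℂ) * E j i)
        - ∑ j, (∑ i, (S i j : ℂ) * ((pd i (fun t => vstar t k) x : ℝ) : ℂ)) * ce j x := by
    calc lam * ∑ j, ((pd j (fun t => vstar t k) x : ℝ) : ℂ) * ce j x
        = ∑ j, ((pd j (fun t => vstar t k) x : ℝ) : ℂ) * (lam * ce j x) := by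
          rw [Finset.mul_sum]
          exact Finset.sum_congr rfl fun j _ => by ring
      _ = ∑ j, ((pd j (fun t => vstar t k) x : ℝ) : ℂ)
            * ((∑ i, E j i * ∑ r, (S i r : ℂ) * (x r : ℂ)) - ∑ i, (S j i : ℂ) * ce i x) :=
          Finset.sum_congr rfl fun j _ => by rw [hlamc j]
      _ = (∑ j, ((pd j (fun t => vstar t k) x : ℝ) : ℂ)
              * ∑ i, E j i * ∑ r, (S i r : ℂ) * (x r : ℂ))
            - ∑ j, ((pd j (fun t => vstar t k) x : ℝ) : ℂ) * ∑ i, (S j i : ℂ) * ce i x := by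
          rw [← Finset.sum_sub_distrib]
          exact Finset.sum_congr rfl fun j _ => by rw [mul_sub]
      _ = _ := by
          rw [sum_mul_swap' Finset.univ Finset.univ
            (fun j => ((pd j (fun t => vstar t k) x : ℝ) : ℂ)) (fun j i => E j i)
            (fun i => ∑ r, (S i r : ℂ) * (x r : ℂ)),
            sum_mul_swap'' Finset.univ
            (fun j => ((pd j (fun t => vstar t k) x : ℝ) : ℂ)) (fun j i => (S j i : ℂ))
            (fun i => ce i x)]
  rw [hL]
  ring
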